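/- Let X ⊆ ℝ^m and Y ⊆ ℝ^n be nonempty compact convex sets, A a q×n and B a q×m real matrix, b ∈ ℝ^q, f : ℝ^n × ℝ^m → ℝ ∪ {+∞} proper convex lower semicontinuous, and g : ℝ^n × ℝ^m → ℝ^p with each component convex and lower semicontinuous; assume f and g are differentiable on Y × X. Define 𝒬(x) = inf { f(y, x) : y ∈ Y, Ay + Bx = b, g(y, x) ≤ 0 } for x ∈ X. Fix x̄ ∈ X with nonempty feasible set, and assume there exists y₀ in the relative interior of Y and in the relative interior of {y : g(y, x̄) ≤ 0} with Ay₀ + Bx̄ = b. Let (λ̄, μ̄), with μ̄ ≥ 0, be an optimal solution of the dual problem sup_{λ ∈ ℝ^q, μ ≥ 0} θ_{x̄}(λ, μ), where θ_{x̄}(λ, μ) = inf_{y ∈ Y} { f(y, x̄) + λᵀ(Ay + Bx̄ − b) + μᵀ g(y, x̄) }, and let ȳ ∈ Y be an optimal solution of the problem defining 𝒬(x̄). Set s(x̄) = ∇_x f(ȳ, x̄) + Bᵀλ̄ + Σ_{i ∈ I(ȳ, x̄)} μ̄_i ∇_x g_i(ȳ, x̄), where I(ȳ, x̄) = { i : g_i(ȳ,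 x̄) = 0 }. Then s(x̄) is a subgradient of 𝒬 at x̄, i.e., 𝒬(x) ≥ 𝒬(x̄) + ⟨s(x̄), x − x̄⟩ for all x ∈ X. -/

import Mathlib

open scoped RealInnerProductSpace Matrix
open scoped Topology
noncomputable section

/-- `ℝ^k` with the Euclidean norm. -/
abbrev E (k : ℕ) := EuclideanSpace ℝ (Fin k)

/-- Reinterpret a plain vector of `ℝ^k` as an element of Euclidean space. -/
def toE {k : ℕ} (v : Fin k → ℝ) : E k := WithLp.toLp 2 v

/-- Convexity for extended-real-valued functions on a real vector space. -/
def EConvexOn {V : Type*} [AddCommGroup V] [Module ℝ V] (f : V → EReal) : Prop :=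
  ∀ x y : V, ∀ t ∈ Set.Ioo (0:ℝ) 1,
    f (t • x + (1 - t) • y) ≤ (t : EReal) * f x + ((1 - t : ℝ) : EReal) * f y

/-- The value function `𝒬(x) = inf { f(y, x) : y ∈ Y, Ay + Bx = b, g(y, x) ≤ 0 }`. -/
def Qvar {n m q p : ℕ} (Y : Set (E n)) (A : Matrix (Fin q) (Fin n) ℝ)
    (B : Matrix (Fin q) (Fin m) ℝ) (b : Fin q → ℝ)
    (f : E n × E m → EReal) (g : Fin p → E n × E m → EReal) (x : E m) : EReal :=
  ⨅ (y : E n) (_ : y ∈ Y) (_ : A.mulVec y + B.mulVec x = b)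
    (_ : ∀ i, g i (y, x) ≤ (0 : EReal)), f (y, x)

/-- The dual function `θ_x(λ, μ) = inf_{y ∈ Y} { f(y,x) + λᵀ(Ay + Bx − b) + μᵀg(y,x) }`. -/
def thetaVar {n m q p : ℕ} (Y : Set (E n)) (A : Matrix (Fin q) (Fin n) ℝ)
    (B : Matrix (Fin q) (Fin m) ℝ) (b : Fin q → ℝ)
    (f : E n × E m → EReal) (g : Fin p → E n × E m → EReal)
    (x : E m) (lam : E q) (mu : E p) : EReal :=
  ⨅ (y : E n) (_ : y ∈ Y),
    (f (y, x) + (((lam : Fin q → ℝ) ⬝ᵥ (A.mulVec y + B.mulVec x - b) : ℝ) : EReal)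
      + ∑ i, (mu i : EReal) * g i (y, x))

private lemma slope_bound {φ : ℝ → ℝ} {d : ℝ} (hφ : HasDerivAt φ d 0)
    (hc : ∀ t ∈ Set.Ioc (0:ℝ) 1, φ t ≤ (1-t) * φ 0 + t * φ 1) : φ 0 + d ≤ φ 1 := by
  have hT : Filter.Tendsto (slope φ 0) (𝓝[>] 0) (𝓝 d) :=
    (hasDerivAt_iff_tendsto_slope.mp hφ).mono_left
      (nhdsWithin_mono 0 (fun t ht => ne_of_gt ht))
  have hev : ∀ᶠ t in 𝓝[>] (0:ℝ), slope φ 0 t ≤ φ 1 - φ 0 := by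
    filter_upwards [Ioc_mem_nhdsGT_of_mem (Set.left_mem_Ico.mpr one_pos)] with t ht
    have h1 := hc t ht
    have ht0 : (0:ℝ) < t := ht.1
    rw [slope_def_field, sub_zero, div_le_iff₀ ht0]
    nlinarith [h1]
  have := le_of_tendsto hT hev
  linarith

private lemma deriv_nonneg_min {φ : ℝ → ℝ} {d : ℝ} (hφ : HasDerivAt φ d 0)
    (hc : ∀ t ∈ Set.Ioc (0:ℝ) 1, φ 0 ≤ φ t) : 0 ≤ d := by
  have hT : Filter.Tendsto (slope φ 0) (𝓝[>] 0) (𝓝 d) :=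
    (hasDerivAt_iff_tendsto_slope.mp hφ).mono_left
      (nhdsWithin_mono 0 (fun t ht => ne_of_gt ht))
  refine ge_of_tendsto hT ?_
  filter_upwards [Ioc_mem_nhdsGT_of_mem (Set.left_mem_Ico.mpr one_pos)] with t ht
  rw [slope_def_field, sub_zero]
  have ht0 : (0:ℝ) < t := ht.1
  have := hc t ht
  apply div_nonneg (by linarith) (le_of_lt ht0)

/-- Convexity inequality transferred to a real-valued representative on a convex set. -/
private lemma transfer {V : Type*} [AddCommGroup V] [Module ℝ V] {S : Set V}
    (hS : Convex ℝ S) {gE : V → EReal} {gR : V → ℝ}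
    (htr : ∀ pt ∈ S, gE pt = ((gR pt : ℝ) : EReal))
    (hconv : ∀ x y : V, ∀ t ∈ Set.Ioo (0:ℝ) 1,
      gE (t • x + (1 - t) • y) ≤ (t : EReal) * gE x + ((1 - t : ℝ) : EReal) * gE y)
    {p₁ p₂ : V} (h₁ : p₁ ∈ S) (h₂ : p₂ ∈ S) {a b : ℝ}
    (ha : 0 ≤ a) (hb : 0 ≤ b) (hab : a + b = 1) :
    gR (a • p₁ + b • p₂) ≤ a * gR p₁ + b * gR p₂ := by
  rcases eq_or_lt_of_le ha with h0 | hapos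
  · have hb1 : b = 1 := by linarith
    simp [← h0, hb1]
  rcases eq_or_lt_of_le hb with h0 | hbpos
  · have ha1 : a = 1 := by linarith
    simp [← h0, ha1]
  have hb' : b = 1 - a := by linarith
  have ha1 : a < 1 := by linarith
  have hmem : a • p₁ + b • p₂ ∈ S := hS h₁ h₂ ha hb hab
  have := hconv p₁ p₂ a ⟨hapos, ha1⟩
  rw [← hb'] at this
  rw [htr _ hmem, htr _ h₁, htr _ h₂, ← EReal.coe_mul, ← EReal.coe_mul, ← EReal.coe_add,
    EReal.coe_le_coe_iff] at this
  linarith [this]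

private lemma ecoe_sum {ι : Type*} (s : Finset ι) (h : ι → ℝ) :
    ((∑ i ∈ s, h i : ℝ) : EReal) = ∑ i ∈ s, ((h i :ℝ):EReal) := by
  induction s using Finset.cons_induction with
  | empty => simp
  | cons i s his ih => rw [Finset.sum_cons, Finset.sum_cons, EReal.coe_add, ih]

set_option maxHeartbeats 1000000 in
/-- Exact cut for the value function of a convex problem with variable feasible set:
with `ȳ` a primal optimal solution and `(λ̄, μ̄)` a dual optimal solution at `x̄`, the vector
`s(x̄) = ∇_x f(ȳ, x̄) + Bᵀλ̄ + Σ_{i ∈ I(ȳ, x̄)} μ̄ᵢ ∇_x gᵢ(ȳ, x̄)` is a subgradient of `𝒬`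
at `x̄`: `𝒬(x) ≥ 𝒬(x̄) + ⟨s(x̄), x − x̄⟩` for all `x ∈ X`. -/
theorem exact_cut_value_function
    {n m q p : ℕ} (X : Set (E m)) (Y : Set (E n))
    (hXne : X.Nonempty) (hXcp : IsCompact X) (hXcv : Convex ℝ X)
    (hYne : Y.Nonempty) (hYcp : IsCompact Y) (hYcv : Convex ℝ Y)
    (A : Matrix (Fin q) (Fin n) ℝ) (B : Matrix (Fin q) (Fin m) ℝ) (b : Fin q → ℝ)
    -- (H1): f proper convex lower semicontinuous
    (f : E n × E m → EReal)
    (hfbot : ∀ pt, f pt ≠ ⊥) (hfproper : ∃ pt, f pt ≠ ⊤)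
    (hfconv : EConvexOn f) (hflsc : LowerSemicontinuous f)
    -- (H2): each gᵢ convex lower semicontinuous (with values in ℝ ∪ {+∞})
    (g : Fin p → E n × E m → EReal)
    (hgbot : ∀ i pt, g i pt ≠ ⊥)
    (hgconv : ∀ i, EConvexOn (g i)) (hglsc : ∀ i, LowerSemicontinuous (g i))
    -- f and g are differentiable (finite, real-valued with differentiable
    -- representations fr, gr) on Y × X
    (fr : E n × E m → ℝ) (gr : Fin p → E n × E m → ℝ)
    (hfr : ∀ pt ∈ Y ×ˢ X, f pt = ((fr pt : ℝ) : EReal))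
    (hgr : ∀ i, ∀ pt ∈ Y ×ˢ X, g i pt = ((gr i pt : ℝ) : EReal))
    (hfrdiff : ∀ pt ∈ Y ×ˢ X, DifferentiableAt ℝ fr pt)
    (hgrdiff : ∀ i, ∀ pt ∈ Y ×ˢ X, DifferentiableAt ℝ (gr i) pt)
    (xb : E m) (hxb : xb ∈ X)
    -- nonempty feasible set at x̄ and constraint qualification (Slater at x̄)
    (y₀ : E n) (hy₀Y : y₀ ∈ intrinsicInterior ℝ Y)
    (hy₀g : y₀ ∈ intrinsicInterior ℝ {y : E n | ∀ i, g i (y, xb) ≤ (0 : EReal)})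
    (hy₀lin : A.mulVec y₀ + B.mulVec xb = b)
    -- (λ̄, μ̄): optimal solution of the dual problem at x̄
    (lamb : E q) (mub : E p) (hmub : ∀ i, 0 ≤ mub i)
    (hdualopt : ∀ (lam : E q) (mu : E p), (∀ i, 0 ≤ mu i) →
      thetaVar Y A B b f g xb lam mu ≤ thetaVar Y A B b f g xb lamb mub)
    -- ȳ: an element of the primal solution set Sol(x̄)
    (yb : E n) (hybY : yb ∈ Y) (hyblin : A.mulVec yb + B.mulVec xb = b)
    (hybg : ∀ i, g i (yb, xb) ≤ (0 : EReal))
    (hybopt : f (yb, xb) = Qvar Y A B b f g xb) :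
    ∀ x ∈ X,
      Qvar Y A B b f g xb +
        ((⟪gradient (fun x' => fr (yb, x')) xb + toE (Bᵀ.mulVec lamb)
            + ∑ i, (if g i (yb, xb) = (0 : EReal) then mub i else 0)
                • gradient (fun x' => gr i (yb, x')) xb,
            x - xb⟫ : ℝ) : EReal)
        ≤ Qvar Y A B b f g x := by
  intro x hx
  have hzb : ((yb, xb) : E n × E m) ∈ Y ×ˢ X := ⟨hybY, hxb⟩
  have hprod : Convex ℝ (Y ×ˢ X) := hYcv.prod hXcv
  have hGyb : ∀ i, gr i (yb, xb) ≤ 0 := by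
    intro i
    have := hybg i
    rw [hgr i _ hzb] at this
    exact_mod_cast this
  have heyb : A.mulVec yb + B.mulVec xb - b = 0 := sub_eq_zero_of_eq hyblin
  have hQv : Qvar Y A B b f g xb = ((fr (yb, xb) : ℝ) : EReal) := by
    rw [← hybopt, hfr _ hzb]
  -- ===== the epigraph-type set C =====
  set C : Set ((Fin q → ℝ) × (Fin p → ℝ) × ℝ) :=
    {z | ∃ y ∈ Y, A.mulVec y + B.mulVec xb - b = z.1 ∧
      (∀ i, gr i (y, xb) ≤ z.2.1 i) ∧ fr (y, xb) ≤ z.2.2} with hC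
  have hCconv : Convex ℝ C := by
    rintro ⟨zu1, zw1, zt1⟩ ⟨y1, hy1, he1, hg1, hf1⟩ ⟨zu2, zw2, zt2⟩
      ⟨y2, hy2, he2, hg2, hf2⟩ a c ha hc hac
    dsimp only at he1 he2 hg1 hg2 hf1 hf2
    have hcombo : a • ((y1, xb) : E n × E m) + c • (y2, xb) = (a • y1 + c • y2, xb) := by
      rw [Prod.smul_mk, Prod.smul_mk, Prod.mk_add_mk, ← add_smul, hac, one_smul]
    simp only [hC, Set.mem_setOf_eq, Prod.smul_mk, Prod.mk_add_mk]
    refine ⟨a • y1 + c • y2, hYcv hy1 hy2 ha hc hac, ?_, ?_, ?_⟩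
    · rw [← he1, ← he2]
      have hmv : A.mulVec (a • y1 + c • y2) = a • A.mulVec y1 + c • A.mulVec y2 := by
        rw [Matrix.mulVec_add, Matrix.mulVec_smul, Matrix.mulVec_smul]
      rw [WithLp.ofLp_add, WithLp.ofLp_smul, WithLp.ofLp_smul, hmv]
      funext j
      simp only [Pi.add_apply, Pi.sub_apply, Pi.smul_apply, smul_eq_mul]
      linear_combination (b j - B.mulVec xb j) * hac
    · intro i
      have h2 := transfer hprod (hgr i) (hgconv i)
        (show ((y1, xb) : E n × E m) ∈ Y ×ˢ X from ⟨hy1, hxb⟩)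
        (show ((y2, xb) : E n × E m) ∈ Y ×ˢ X from ⟨hy2, hxb⟩) ha hc hac
      rw [hcombo] at h2
      simp only [Pi.add_apply, Pi.smul_apply, smul_eq_mul]
      nlinarith [hg1 i, hg2 i, ha, hc, h2]
    · have h2 := transfer hprod hfr hfconv
        (show ((y1, xb) : E n × E m) ∈ Y ×ˢ X from ⟨hy1, hxb⟩)
        (show ((y2, xb) : E n × E m) ∈ Y ×ˢ X from ⟨hy2, hxb⟩) ha hc hac
      rw [hcombo] at h2
      simp only [smul_eq_mul]
      nlinarith [hf1, hf2, ha, hc, h2]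
  have hCclosed : IsClosed C := by
    apply IsSeqClosed.isClosed
    intro zk z hzk hz
    choose yk hykY hyke hykg hykf using hzk
    obtain ⟨ys, hysY, φk, hφmono, hφtend⟩ := hYcp.tendsto_subseq hykY
    have hzφ : Filter.Tendsto (fun k => zk (φk k)) Filter.atTop (𝓝 z) :=
      hz.comp hφmono.tendsto_atTop
    refine ⟨ys, hysY, ?_, ?_, ?_⟩
    · have hecont : Continuous (fun y : E n => A.mulVec y + B.mulVec xb - b) := by
        have hlin : IsLinearMap ℝ (fun y : E n => A.mulVec y) :=
          ⟨fun a b' => Matrix.mulVec_add A a b', fun c a => Matrix.mulVec_smul A c a⟩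
        exact ((LinearMap.continuous_of_finiteDimensional
          (IsLinearMap.mk' _ hlin)).add continuous_const).sub continuous_const
      have h1 : Filter.Tendsto (fun k => A.mulVec (yk (φk k)) + B.mulVec xb - b)
          Filter.atTop (𝓝 (A.mulVec ys + B.mulVec xb - b)) := by
        simpa [Function.comp_def] using (hecont.tendsto ys).comp hφtend
      have h3 : Filter.Tendsto (fun k => (zk (φk k)).1) Filter.atTop (𝓝 z.1) := by
        simpa [Function.comp_def] using (continuous_fst.tendsto z).comp hzφ
      have h2 : Filter.Tendsto (fun k => A.mulVec (yk (φk k)) + B.mulVec xb - b)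
          Filter.atTop (𝓝 z.1) := h3.congr (fun k => (hyke (φk k)).symm)
      exact tendsto_nhds_unique h1 h2
    · intro i
      by_contra hlt
      push_neg at hlt
      obtain ⟨r, hr1, hr2⟩ := exists_between hlt
      have hrE : ((r : ℝ) : EReal) < g i (ys, xb) := by
        rw [hgr i _ ⟨hysY, hxb⟩]
        exact_mod_cast hr2
      have hev := (hφtend.prodMk_nhds (tendsto_const_nhds (x := xb))).eventually
        (hglsc i (ys, xb) _ hrE)
      have h3 : Filter.Tendsto (fun k => (zk (φk k)).2.1 i) Filter.atTop (𝓝 (z.2.1 i)) := by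
        simpa [Function.comp_def] using
          (((continuous_apply i).comp (continuous_fst.comp continuous_snd)).tendsto z).comp hzφ
      have hge : ∀ᶠ k in Filter.atTop, r ≤ (zk (φk k)).2.1 i := by
        filter_upwards [hev] with k hk
        rw [hgr i _ ⟨hykY (φk k), hxb⟩] at hk
        have hk2 : r < gr i (yk (φk k), xb) := by exact_mod_cast hk
        exact hk2.le.trans (hykg (φk k) i)
      have := ge_of_tendsto h3 hge
      linarith
    · by_contra hlt
      push_neg at hlt
      obtain ⟨r, hr1, hr2⟩ := exists_between hlt
      have hrE : ((r : ℝ) : EReal) < f (ys, xb) := by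
        rw [hfr _ ⟨hysY, hxb⟩]
        exact_mod_cast hr2
      have hev := (hφtend.prodMk_nhds (tendsto_const_nhds (x := xb))).eventually
        (hflsc (ys, xb) _ hrE)
      have h3 : Filter.Tendsto (fun k => (zk (φk k)).2.2) Filter.atTop (𝓝 (z.2.2)) := by
        simpa [Function.comp_def] using
          ((continuous_snd.comp continuous_snd).tendsto z).comp hzφ
      have hge : ∀ᶠ k in Filter.atTop, r ≤ (zk (φk k)).2.2 := by
        filter_upwards [hev] with k hk
        rw [hfr _ ⟨hykY (φk k), hxb⟩] at hk
        have hk2 : r < fr (yk (φk k), xb) := by exact_mod_cast hk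
        exact hk2.le.trans (hykf (φk k))
      have := ge_of_tendsto h3 hge
      linarith
  -- ===== elements of θ are real on Y =====
  have helem : ∀ (lam : E q) (mu : E p) (y : E n), y ∈ Y →
      (f (y, xb) + (((lam : Fin q → ℝ) ⬝ᵥ (A.mulVec y + B.mulVec xb - b) : ℝ) : EReal)
        + ∑ i, ((mu i : ℝ) : EReal) * g i (y, xb))
      = (((fr (y, xb) + lam ⬝ᵥ (A.mulVec y + B.mulVec xb - b)
          + ∑ i, mu i * gr i (y, xb) : ℝ)) : EReal) := by
    intro lam mu y hy
    have hterms : ∀ i ∈ Finset.univ, ((mu i : ℝ) : EReal) * g i (y, xb)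
        = (((mu i * gr i (y, xb) : ℝ)) : EReal) := fun i _ => by
      rw [hgr i _ ⟨hy, hxb⟩, ← EReal.coe_mul]
    rw [Finset.sum_congr rfl hterms, ← ecoe_sum, hfr _ ⟨hy, hxb⟩, ← EReal.coe_add,
      ← EReal.coe_add]
  -- ===== zero duality gap via separation =====
  have hkey : ∀ r : ℝ, r < fr (yb, xb) →
      ((r : ℝ) : EReal) < thetaVar Y A B b f g xb lamb mub := by
    intro r hr
    have hnotin : (((0 : Fin q → ℝ), (0 : Fin p → ℝ), r) :
        (Fin q → ℝ) × (Fin p → ℝ) × ℝ) ∉ C := by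
      rintro ⟨y, hyY, he, hg', hf'⟩
      have hfeas1 : A.mulVec y + B.mulVec xb = b := sub_eq_zero.mp he
      have hfeas2 : ∀ i, g i (y, xb) ≤ (0 : EReal) := by
        intro i
        rw [hgr i _ ⟨hyY, hxb⟩]
        exact_mod_cast hg' i
      have hQle : Qvar Y A B b f g xb ≤ f (y, xb) := by
        simp only [Qvar]
        exact iInf_le_of_le y (iInf_le_of_le hyY (iInf_le_of_le hfeas1 (iInf_le _ hfeas2)))
      rw [hQv, hfr _ ⟨hyY, hxb⟩, EReal.coe_le_coe_iff] at hQle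
      have hle : fr (y, xb) ≤ r := hf'
      linarith
    obtain ⟨ψ, u', hu1, hu2⟩ := geometric_hahn_banach_point_closed hCconv hCclosed hnotin
    set slam : Fin q → ℝ := fun i => ψ (fun j => if i = j then 1 else 0, 0, 0) with hslam
    set smu : Fin p → ℝ := fun i => ψ (0, fun j => if i = j then 1 else 0, 0) with hsmu
    set γ : ℝ := ψ (0, 0, 1) with hγdef
    have hψ : ∀ (zu : Fin q → ℝ) (zw : Fin p → ℝ) (zt : ℝ),
        ψ (zu, zw, zt) = slam ⬝ᵥ zu + smu ⬝ᵥ zw + γ * zt := by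
      intro zu zw zt
      have h1 : (zu, zw, zt) = ((zu, 0, 0) : (Fin q → ℝ) × (Fin p → ℝ) × ℝ)
          + (0, zw, 0) + (0, 0, zt) := by
        simp [Prod.ext_iff]
      rw [h1, map_add, map_add]
      have e1 : ψ (zu, 0, 0) = slam ⬝ᵥ zu := by
        have := LinearMap.pi_apply_eq_sum_univ
          (ψ.toLinearMap.comp (LinearMap.inl ℝ (Fin q → ℝ) ((Fin p → ℝ) × ℝ))) zu
        simp only [LinearMap.comp_apply, LinearMap.inl_apply,
          ContinuousLinearMap.coe_coe] at this
        rw [show ((zu, 0, 0) : (Fin q → ℝ) × (Fin p → ℝ) × ℝ) = (zu, (0,0)) from rfl]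
        rw [show ((0 : (Fin p → ℝ) × ℝ)) = ((0,0) : (Fin p → ℝ) × ℝ) from rfl] at this
        rw [this, dotProduct]
        exact Finset.sum_congr rfl (fun i _ => by rw [smul_eq_mul, mul_comm])
      have e2 : ψ (0, zw, 0) = smu ⬝ᵥ zw := by
        have := LinearMap.pi_apply_eq_sum_univ ((ψ.toLinearMap.comp
          (LinearMap.inr ℝ (Fin q → ℝ) ((Fin p → ℝ) × ℝ))).comp
            (LinearMap.inl ℝ (Fin p → ℝ) ℝ)) zw
        simp only [LinearMap.comp_apply, LinearMap.inl_apply, LinearMap.inr_apply,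
          ContinuousLinearMap.coe_coe] at this
        rw [show ((0, zw, 0) : (Fin q → ℝ) × (Fin p → ℝ) × ℝ)
          = ((0 : Fin q → ℝ), ((zw, 0) : (Fin p → ℝ) × ℝ)) from rfl]
        rw [this, dotProduct]
        exact Finset.sum_congr rfl (fun i _ => by rw [smul_eq_mul, mul_comm])
      have e3 : ψ (0, 0, zt) = γ * zt := by
        have h2 : ((0, 0, zt) : (Fin q → ℝ) × (Fin p → ℝ) × ℝ) = zt • (0,0,1) := by
          simp [Prod.ext_iff]
        rw [h2, map_smul, smul_eq_mul, mul_comm]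
      rw [e1, e2, e3]
    have hvC : (((0 : Fin q → ℝ), (0 : Fin p → ℝ), fr (yb, xb)) :
        (Fin q → ℝ) × (Fin p → ℝ) × ℝ) ∈ C :=
      ⟨yb, hybY, heyb, fun i => hGyb i, le_refl _⟩
    have hγv := hu2 _ hvC
    rw [hψ] at hγv hu1
    simp only [dotProduct_zero, zero_add] at hu1 hγv
    have hγ : 0 < γ := by nlinarith
    have hγ0 : γ ≠ 0 := ne_of_gt hγ
    have hsmupos : ∀ i, 0 ≤ smu i := by
      intro i
      by_contra hneg
      push_neg at hneg
      set τ : ℝ := (γ * fr (yb, xb) - u' + 1) / (-smu i) with hτ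
      have hτpos : 0 < τ := div_pos (by nlinarith) (by linarith)
      have hmem : (((0 : Fin q → ℝ), τ • (fun j => if i = j then (1:ℝ) else 0), fr (yb, xb)) :
          (Fin q → ℝ) × (Fin p → ℝ) × ℝ) ∈ C := by
        refine ⟨yb, hybY, heyb, fun j => ?_, le_refl _⟩
        have hnn : (0:ℝ) ≤ (τ • fun j => if i = j then (1:ℝ) else 0) j := by
          simp only [Pi.smul_apply, smul_eq_mul]
          by_cases hij : i = j
          · simp [hij, le_of_lt hτpos]
          · simp [hij]
        exact (hGyb j).trans hnn
      have h2 := hu2 _ hmem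
      rw [hψ] at h2
      have hdot : smu ⬝ᵥ (τ • fun j => if i = j then (1:ℝ) else 0) = τ * smu i := by
        simp [dotProduct, mul_ite, mul_comm, Finset.sum_ite_eq]
      rw [hdot] at h2
      simp only [dotProduct_zero, zero_add] at h2
      have hsne : -smu i ≠ 0 := ne_of_gt (neg_pos.mpr hneg)
      have hτm : τ * smu i = -(γ * fr (yb, xb) - u' + 1) := by
        rw [hτ]
        rw [div_mul_eq_mul_div, div_eq_iff hsne]
        ring
      rw [hτm] at h2
      linarith
    set lam : E q := WithLp.toLp 2 (fun i => slam i / γ) with hlam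
    set mu : E p := WithLp.toLp 2 (fun i => smu i / γ) with hmu
    have hmupos : ∀ i, 0 ≤ mu i := fun i => div_nonneg (hsmupos i) (le_of_lt hγ)
    have hθ : ((u' / γ : ℝ) : EReal) ≤ thetaVar Y A B b f g xb lam mu := by
      simp only [thetaVar]
      refine le_iInf fun y => le_iInf fun hy => ?_
      have hyC : ((A.mulVec y + B.mulVec xb - b, (fun i => gr i (y, xb)), fr (y, xb)) :
          (Fin q → ℝ) × (Fin p → ℝ) × ℝ) ∈ C :=
        ⟨y, hy, rfl, fun i => le_refl _, le_refl _⟩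
      have h2 := hu2 _ hyC
      rw [hψ] at h2
      rw [helem lam mu y hy, EReal.coe_le_coe_iff]
      have e1 : lam ⬝ᵥ (A.mulVec y + B.mulVec xb - b)
          = (slam ⬝ᵥ (A.mulVec y + B.mulVec xb - b)) / γ := by
        rw [hlam, dotProduct, dotProduct, Finset.sum_div]
        exact Finset.sum_congr rfl fun i _ => div_mul_eq_mul_div _ _ _
      have e2 : ∑ i, mu i * gr i (y, xb) = (smu ⬝ᵥ (fun i => gr i (y, xb))) / γ := by
        rw [hmu, dotProduct, Finset.sum_div]
        exact Finset.sum_congr rfl fun i _ => div_mul_eq_mul_div _ _ _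
      rw [e1, e2, div_le_iff₀ hγ]
      have hexp : (fr (y, xb) + slam ⬝ᵥ (A.mulVec y + B.mulVec xb - b) / γ
          + smu ⬝ᵥ (fun i => gr i (y, xb)) / γ) * γ
          = slam ⬝ᵥ (A.mulVec y + B.mulVec xb - b) + smu ⬝ᵥ (fun i => gr i (y, xb))
            + γ * fr (y, xb) := by
        field_simp
        ring
      rw [hexp]
      linarith
    have hru : ((r : ℝ) : EReal) < ((u' / γ : ℝ) : EReal) := by
      rw [EReal.coe_lt_coe_iff]
      rw [lt_div_iff₀ hγ]
      nlinarith
    exact lt_of_lt_of_le (lt_of_lt_of_le hru hθ) (hdualopt lam mu hmupos)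
  -- ===== strong duality consequences =====
  have hθv : ((fr (yb, xb) : ℝ) : EReal) ≤ thetaVar Y A B b f g xb lamb mub := by
    by_contra hcon
    push_neg at hcon
    obtain ⟨r, hr1, hr2⟩ := EReal.exists_between_coe_real hcon
    exact absurd (hkey r (by exact_mod_cast hr2)) (not_lt.mpr hr1.le)
  have hLbar : ∀ y ∈ Y, fr (yb, xb) ≤ fr (y, xb)
      + lamb ⬝ᵥ (A.mulVec y + B.mulVec xb - b) + ∑ i, mub i * gr i (y, xb) := by
    intro y hy
    have h1 : thetaVar Y A B b f g xb lamb mub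
        ≤ f (y, xb) + (((lamb : Fin q → ℝ) ⬝ᵥ (A.mulVec y + B.mulVec xb - b) : ℝ) : EReal)
          + ∑ i, ((mub i : ℝ) : EReal) * g i (y, xb) := by
      simp only [thetaVar]
      exact iInf_le_of_le y (iInf_le _ hy)
    have h2 := le_trans hθv h1
    rw [helem lamb mub y hy, EReal.coe_le_coe_iff] at h2
    exact h2
  have hcs : ∀ i, mub i * gr i (yb, xb) = 0 := by
    have h1 := hLbar yb hybY
    rw [heyb] at h1
    simp only [dotProduct_zero, add_zero] at h1
    have hS : 0 ≤ ∑ i, mub i * gr i (yb, xb) := by linarith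
    have hterm : ∀ i ∈ Finset.univ, mub i * gr i (yb, xb) ≤ 0 := fun i _ => by
      have := mul_le_mul_of_nonneg_left (hGyb i) (hmub i)
      simpa using this
    have hsum0 : ∑ i, mub i * gr i (yb, xb) = 0 :=
      le_antisymm (Finset.sum_nonpos hterm) hS
    intro i
    exact (Finset.sum_eq_zero_iff_of_nonpos hterm).mp hsum0 i (Finset.mem_univ i)
  -- ===== derivative data =====
  set Dfr : E n × E m →L[ℝ] ℝ := fderiv ℝ fr (yb, xb) with hDfrdef
  have hDfr : HasFDerivAt fr Dfr (yb, xb) := (hfrdiff _ hzb).hasFDerivAt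
  set Dg : Fin p → (E n × E m →L[ℝ] ℝ) := fun i => fderiv ℝ (gr i) (yb, xb) with hDgdef
  have hDg : ∀ i, HasFDerivAt (gr i) (Dg i) (yb, xb) := fun i => (hgrdiff i _ hzb).hasFDerivAt
  -- ===== inner product identity =====
  have hip : (⟪gradient (fun x' => fr (yb, x')) xb + toE (Bᵀ.mulVec lamb)
        + ∑ i, (if g i (yb, xb) = (0 : EReal) then mub i else 0)
            • gradient (fun x' => gr i (yb, x')) xb, x - xb⟫ : ℝ)
      = Dfr (0, x - xb) + lamb ⬝ᵥ B.mulVec (x - xb) + ∑ i, mub i * Dg i (0, x - xb) := by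
    have hifeq : ∀ i, (if g i (yb, xb) = (0 : EReal) then mub i else 0) = mub i := by
      intro i
      by_cases h0 : g i (yb, xb) = (0 : EReal)
      · simp [h0]
      · have hne : gr i (yb, xb) ≠ 0 := by
          intro hz'
          exact h0 (by rw [hgr i _ hzb, hz', EReal.coe_zero])
        have hmu0 : mub i = 0 := by
          rcases mul_eq_zero.mp (hcs i) with h | h
          · exact h
          · exact absurd h hne
        simp [h0, hmu0]
    have hgradf : (⟪gradient (fun x' => fr (yb, x')) xb, x - xb⟫ : ℝ) = Dfr (0, x - xb) := by
      have hc : HasFDerivAt (fun x' => fr (yb, x'))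
          (Dfr.comp (ContinuousLinearMap.inr ℝ (E n) (E m))) xb :=
        hDfr.comp xb (hasFDerivAt_prodMk_right yb xb)
      rw [gradient, hc.fderiv, InnerProductSpace.toDual_symm_apply]
      rfl
    have hgradg : ∀ i, (⟪gradient (fun x' => gr i (yb, x')) xb, x - xb⟫ : ℝ)
        = Dg i (0, x - xb) := by
      intro i
      have hc : HasFDerivAt (fun x' => gr i (yb, x'))
          ((Dg i).comp (ContinuousLinearMap.inr ℝ (E n) (E m))) xb :=
        (hDg i).comp xb (hasFDerivAt_prodMk_right yb xb)
      rw [gradient, hc.fderiv, InnerProductSpace.toDual_symm_apply]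
      rfl
    have hB : (⟪toE (Bᵀ.mulVec lamb), x - xb⟫ : ℝ) = lamb ⬝ᵥ B.mulVec (x - xb) := by
      rw [Matrix.dotProduct_mulVec, ← Matrix.mulVec_transpose, PiLp.inner_apply]
      simp [toE, dotProduct, mul_comm]
    rw [inner_add_left, inner_add_left, sum_inner, hgradf, hB]
    congr 1
    refine Finset.sum_congr rfl fun i _ => ?_
    rw [hifeq i, real_inner_smul_left, hgradg i]
  -- ===== conclusion =====
  rw [hQv, hip, ← EReal.coe_add]
  simp only [Qvar]
  refine le_iInf fun y => le_iInf fun hyY => le_iInf fun hylin => le_iInf fun hyg => ?_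
  rw [hfr _ ⟨hyY, hx⟩, EReal.coe_le_coe_iff]
  -- real-valued subgradient inequality
  have hgyx : ∀ i, gr i (y, x) ≤ 0 := by
    intro i
    have := hyg i
    rw [hgr i _ ⟨hyY, hx⟩] at this
    exact_mod_cast this
  have heyx : A.mulVec y + B.mulVec x - b = 0 := sub_eq_zero_of_eq hylin
  set W : E n × E m := (y - yb, x - xb) with hW
  set W' : E n × E m := (y - yb, 0) with hW'
  have h1y : yb + (y - yb) = y := by abel
  have h1x : xb + (x - xb) = x := by abel
  have hpt1 : ((yb, xb) : E n × E m) + W = (y, x) := by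
    rw [hW, Prod.mk_add_mk, Prod.mk.injEq]
    exact ⟨h1y, h1x⟩
  -- derivative of the full Lagrangian along the segment towards (y, x)
  have hlineW : HasDerivAt (fun t : ℝ => ((yb, xb) : E n × E m) + t • W) W 0 := by
    simpa using ((hasDerivAt_id (0:ℝ)).smul_const W).const_add ((yb, xb) : E n × E m)
  have hzero : ((yb, xb) : E n × E m) + (0:ℝ) • W = (yb, xb) := by simp
  have hfrW : HasDerivAt (fun t : ℝ => fr (((yb, xb) : E n × E m) + t • W)) (Dfr W) 0 := by
    have hD : HasFDerivAt fr Dfr ((fun t : ℝ => ((yb, xb) : E n × E m) + t • W) 0) := by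
      simpa [hzero] using hDfr
    exact hD.comp_hasDerivAt 0 hlineW
  have hgrW : ∀ i, HasDerivAt (fun t : ℝ => gr i (((yb, xb) : E n × E m) + t • W))
      (Dg i W) 0 := by
    intro i
    have hD : HasFDerivAt (gr i) (Dg i) ((fun t : ℝ => ((yb, xb) : E n × E m) + t • W) 0) := by
      simpa [hzero] using hDg i
    exact hD.comp_hasDerivAt 0 hlineW
  have haffW : HasDerivAt (fun t : ℝ =>
      lamb ⬝ᵥ (A.mulVec (yb + t • (y - yb)) + B.mulVec (xb + t • (x - xb)) - b))
      (lamb ⬝ᵥ (A.mulVec (y - yb) + B.mulVec (x - xb))) 0 := by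
    have heq : (fun t : ℝ =>
        lamb ⬝ᵥ (A.mulVec (yb + t • (y - yb)) + B.mulVec (xb + t • (x - xb)) - b))
        = fun t : ℝ => lamb ⬝ᵥ (A.mulVec yb + B.mulVec xb - b)
          + (lamb ⬝ᵥ (A.mulVec (y - yb) + B.mulVec (x - xb))) * t := by
      funext t
      rw [show A.mulVec (yb + t • (y - yb)) = A.mulVec yb + t • A.mulVec (y - yb) from by
            rw [Matrix.mulVec_add, Matrix.mulVec_smul],
          show B.mulVec (xb + t • (x - xb)) = B.mulVec xb + t • B.mulVec (x - xb) from by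
            rw [Matrix.mulVec_add, Matrix.mulVec_smul]]
      simp only [dotProduct_add, dotProduct_sub, dotProduct_smul,
        smul_eq_mul]
      ring
    rw [heq]
    simpa using ((hasDerivAt_id (0:ℝ)).const_mul
      (lamb ⬝ᵥ (A.mulVec (y - yb) + B.mulVec (x - xb)))).const_add
        (lamb ⬝ᵥ (A.mulVec yb + B.mulVec xb - b))
  set φf : ℝ → ℝ := fun t => fr (((yb, xb) : E n × E m) + t • W)
      + lamb ⬝ᵥ (A.mulVec (yb + t • (y - yb)) + B.mulVec (xb + t • (x - xb)) - b)
      + ∑ i, mub i * gr i (((yb, xb) : E n × E m) + t • W) with hφf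
  have hφfderiv : HasDerivAt φf (Dfr W + lamb ⬝ᵥ (A.mulVec (y - yb) + B.mulVec (x - xb))
      + ∑ i, mub i * Dg i W) 0 := by
    rw [hφf]
    exact (hfrW.add haffW).add (HasDerivAt.fun_sum fun i _ => (hgrW i).const_mul (mub i))
  have hφ0 : φf 0 = fr (yb, xb) := by
    rw [hφf]
    simp only [zero_smul, add_zero, smul_zero]
    rw [heyb]
    simp only [dotProduct_zero, add_zero]
    rw [Finset.sum_eq_zero fun i _ => hcs i, add_zero]
  have hφ1 : φf 1 ≤ fr (y, x) := by
    rw [hφf]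
    simp only [one_smul]
    rw [hpt1, add_sub_cancel, add_sub_cancel, heyx]
    simp only [dotProduct_zero, add_zero]
    have hsum : ∑ i, mub i * gr i (y, x) ≤ 0 :=
      Finset.sum_nonpos fun i _ => by
        have := mul_le_mul_of_nonneg_left (hgyx i) (hmub i)
        simpa using this
    linarith
  have hφconv : ∀ t ∈ Set.Ioc (0:ℝ) 1, φf t ≤ (1 - t) * φf 0 + t * φf 1 := by
    intro t ht
    have ht0 : 0 ≤ 1 - t := by linarith [ht.2]
    have ht1 : 0 ≤ t := le_of_lt ht.1
    have hts : (1 - t) + t = 1 := by ring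
    have hptc : (1 - t) • ((yb, xb) : E n × E m) + t • ((y, x) : E n × E m)
        = ((yb, xb) : E n × E m) + t • W := by
      rw [hW, Prod.smul_mk, Prod.smul_mk, Prod.mk_add_mk, Prod.smul_mk, Prod.mk_add_mk,
        Prod.mk.injEq]
      constructor <;> module
    have hcf := transfer hprod hfr hfconv hzb
      (⟨hyY, hx⟩ : ((y, x) : E n × E m) ∈ Y ×ˢ X) ht0 ht1 hts
    rw [hptc] at hcf
    have hcg : ∀ i, gr i (((yb, xb) : E n × E m) + t • W)
        ≤ (1 - t) * gr i (yb, xb) + t * gr i (y, x) := by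
      intro i
      have h2 := transfer hprod (hgr i) (hgconv i) hzb
        (⟨hyY, hx⟩ : ((y, x) : E n × E m) ∈ Y ×ˢ X) ht0 ht1 hts
      rwa [hptc] at h2
    have hmid : lamb ⬝ᵥ (A.mulVec (yb + t • (y - yb)) + B.mulVec (xb + t • (x - xb)) - b)
        = (1 - t) * (lamb ⬝ᵥ (A.mulVec yb + B.mulVec xb - b))
          + t * (lamb ⬝ᵥ (A.mulVec y + B.mulVec x - b)) := by
      rw [show A.mulVec (yb + t • (y - yb)) = A.mulVec yb + t • A.mulVec (y - yb) from by
            rw [Matrix.mulVec_add, Matrix.mulVec_smul],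
          show B.mulVec (xb + t • (x - xb)) = B.mulVec xb + t • B.mulVec (x - xb) from by
            rw [Matrix.mulVec_add, Matrix.mulVec_smul],
          Matrix.mulVec_sub, Matrix.mulVec_sub]
      simp only [dotProduct_add, dotProduct_sub, dotProduct_smul,
        smul_eq_mul]
      ring
    have hsumc : ∑ i, mub i * gr i (((yb, xb) : E n × E m) + t • W)
        ≤ (1 - t) * (∑ i, mub i * gr i (yb, xb)) + t * (∑ i, mub i * gr i (y, x)) := by
      rw [Finset.mul_sum, Finset.mul_sum, ← Finset.sum_add_distrib]
      refine Finset.sum_le_sum fun i _ => ?_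
      nlinarith [hmub i, hcg i, ht0, ht1]
    have hval0 : φf 0 = fr (yb, xb) + lamb ⬝ᵥ (A.mulVec yb + B.mulVec xb - b)
        + ∑ i, mub i * gr i (yb, xb) := by
      rw [hφf]
      simp only [zero_smul, add_zero, smul_zero]
    have hval1 : φf 1 = fr (y, x) + lamb ⬝ᵥ (A.mulVec y + B.mulVec x - b)
        + ∑ i, mub i * gr i (y, x) := by
      rw [hφf]
      simp only [one_smul]
      rw [hpt1, add_sub_cancel, add_sub_cancel]
    have hvalt : φf t = fr (((yb, xb) : E n × E m) + t • W)
        + lamb ⬝ᵥ (A.mulVec (yb + t • (y - yb)) + B.mulVec (xb + t • (x - xb)) - b)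
        + ∑ i, mub i * gr i (((yb, xb) : E n × E m) + t • W) := by
      rw [hφf]
    rw [hval0, hval1, hvalt, hmid]
    ring_nf
    ring_nf at hcf hsumc
    linarith [hcf, hsumc]
  -- minimality of ȳ for the Lagrangian in y
  have hlineW' : HasDerivAt (fun t : ℝ => ((yb, xb) : E n × E m) + t • W') W' 0 := by
    simpa using ((hasDerivAt_id (0:ℝ)).smul_const W').const_add ((yb, xb) : E n × E m)
  have hzero' : ((yb, xb) : E n × E m) + (0:ℝ) • W' = (yb, xb) := by simp
  have hfrW' : HasDerivAt (fun t : ℝ => fr (((yb, xb) : E n × E m) + t • W')) (Dfr W') 0 := by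
    have hD : HasFDerivAt fr Dfr ((fun t : ℝ => ((yb, xb) : E n × E m) + t • W') 0) := by
      simpa [hzero'] using hDfr
    exact hD.comp_hasDerivAt 0 hlineW'
  have hgrW' : ∀ i, HasDerivAt (fun t : ℝ => gr i (((yb, xb) : E n × E m) + t • W'))
      (Dg i W') 0 := by
    intro i
    have hD : HasFDerivAt (gr i) (Dg i) ((fun t : ℝ => ((yb, xb) : E n × E m) + t • W') 0) := by
      simpa [hzero'] using hDg i
    exact hD.comp_hasDerivAt 0 hlineW'
  have haffW' : HasDerivAt (fun t : ℝ =>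
      lamb ⬝ᵥ (A.mulVec (yb + t • (y - yb)) + B.mulVec xb - b))
      (lamb ⬝ᵥ A.mulVec (y - yb)) 0 := by
    have heq : (fun t : ℝ => lamb ⬝ᵥ (A.mulVec (yb + t • (y - yb)) + B.mulVec xb - b))
        = fun t : ℝ => lamb ⬝ᵥ (A.mulVec yb + B.mulVec xb - b)
          + (lamb ⬝ᵥ A.mulVec (y - yb)) * t := by
      funext t
      rw [show A.mulVec (yb + t • (y - yb)) = A.mulVec yb + t • A.mulVec (y - yb) from by
            rw [Matrix.mulVec_add, Matrix.mulVec_smul]]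
      simp only [dotProduct_add, dotProduct_sub, dotProduct_smul,
        smul_eq_mul]
      ring
    rw [heq]
    simpa using ((hasDerivAt_id (0:ℝ)).const_mul
      (lamb ⬝ᵥ A.mulVec (y - yb))).const_add (lamb ⬝ᵥ (A.mulVec yb + B.mulVec xb - b))
  set φg : ℝ → ℝ := fun t => fr (((yb, xb) : E n × E m) + t • W')
      + lamb ⬝ᵥ (A.mulVec (yb + t • (y - yb)) + B.mulVec xb - b)
      + ∑ i, mub i * gr i (((yb, xb) : E n × E m) + t • W') with hφg
  have hφgderiv : HasDerivAt φg (Dfr W' + lamb ⬝ᵥ A.mulVec (y - yb)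
      + ∑ i, mub i * Dg i W') 0 := by
    rw [hφg]
    exact (hfrW'.add haffW').add (HasDerivAt.fun_sum fun i _ => (hgrW' i).const_mul (mub i))
  have hφg0 : φg 0 = fr (yb, xb) := by
    rw [hφg]
    simp only [zero_smul, add_zero, smul_zero]
    rw [heyb]
    simp only [dotProduct_zero, add_zero]
    rw [Finset.sum_eq_zero fun i _ => hcs i, add_zero]
  have hφgmin : ∀ t ∈ Set.Ioc (0:ℝ) 1, φg 0 ≤ φg t := by
    intro t ht
    rw [hφg0, hφg]
    show fr (yb, xb) ≤ fr (((yb, xb) : E n × E m) + t • W')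
      + lamb ⬝ᵥ (A.mulVec (yb + t • (y - yb)) + B.mulVec xb - b)
      + ∑ i, mub i * gr i (((yb, xb) : E n × E m) + t • W')
    have hptg : ((yb, xb) : E n × E m) + t • W' = (yb + t • (y - yb), xb) := by
      rw [hW', Prod.smul_mk, Prod.mk_add_mk, smul_zero, add_zero]
    rw [hptg]
    have hmemY : yb + t • (y - yb) ∈ Y := by
      have hcomb : yb + t • (y - yb) = (1 - t) • yb + t • y := by module
      rw [hcomb]
      exact hYcv hybY hyY (by linarith [ht.2]) (le_of_lt ht.1) (by ring)
    exact hLbar _ hmemY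
  have hdy : 0 ≤ Dfr W' + lamb ⬝ᵥ A.mulVec (y - yb) + ∑ i, mub i * Dg i W' :=
    deriv_nonneg_min hφgderiv hφgmin
  -- splitting the derivative
  have hWW : W = W' + ((0, x - xb) : E n × E m) := by
    rw [hW, hW', Prod.mk_add_mk, add_zero, zero_add]
  have hsplit : Dfr W + lamb ⬝ᵥ (A.mulVec (y - yb) + B.mulVec (x - xb)) + ∑ i, mub i * Dg i W
      = (Dfr W' + lamb ⬝ᵥ A.mulVec (y - yb) + ∑ i, mub i * Dg i W')
        + (Dfr ((0, x - xb) : E n × E m) + lamb ⬝ᵥ B.mulVec (x - xb)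
          + ∑ i, mub i * Dg i ((0, x - xb) : E n × E m)) := by
    have h1 : Dfr W = Dfr W' + Dfr ((0, x - xb) : E n × E m) := by rw [hWW, map_add]
    have h3 : ∑ i, mub i * Dg i W
        = ∑ i, mub i * Dg i W' + ∑ i, mub i * Dg i ((0, x - xb) : E n × E m) := by
      rw [← Finset.sum_add_distrib]
      exact Finset.sum_congr rfl fun i _ => by rw [hWW, map_add, mul_add]
    rw [h1, h3, dotProduct_add]
    ring
  -- put everything together
  have hkeyW := slope_bound hφfderiv hφconv
  rw [hφ0] at hkeyW
  have : Dfr ((0, x - xb) : E n × E m) = Dfr (0, x - xb) := rfl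
  linarith [hkeyW, hφ1, hdy, hsplit]
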